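/- Let q be a prime power and let 1, u₁, …, u_r ∈ GF(q^l) be linearly independent over GF(q). Then the r × r matrix g over GF(q^l) with entries g_{ij} = a_{ij} + b_j·u_i (where a_{ij}, b_j ∈ GF(q)) is invertible if and only if the r vectors v_j = (b_j, a_{1j}, …, a_{rj}) ∈ GF(q)^{r+1}, for 1 ≤ j ≤ r, are linearly independent over GF(q). -/

import Mathlib

theorem stmt_1 (q l r : ℕ) (hl : 1 ≤ l)
    (K L : Type*) [Field K] [Fintype K] [Field L] [Algebra K L]
    (hq : Fintype.card K = q) (hrank : Module.finrank K L = l)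
    (u : Fin r → L) (hu : LinearIndependent K (Fin.cons (1 : L) u))
    (a : Fin r → Fin r → K) (b : Fin r → K)
    (g : Matrix (Fin r) (Fin r) L)
    (hg : ∀ i j, g i j = algebraMap K L (a i j) + algebraMap K L (b j) * u i)
    (v : Fin r → Fin (r + 1) → K)
    (hv : ∀ j, v j = Fin.cons (b j) (fun i => a i j)) :
    IsUnit g ↔ LinearIndependent K v := by
  have hinj : Function.Injective (algebraMap K L) := (algebraMap K L).injective
  -- coefficient extraction from linear independence of (1, u)
  have hcoef : ∀ c : Fin (r+1) → K,
      (algebraMap K L (c 0) + ∑ i, algebraMap K L (c i.succ) * u i = 0) → ∀ p, c p = 0 := by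
    intro c hc
    refine Fintype.linearIndependent_iff.mp hu c ?_
    rw [Fin.sum_univ_succ]
    simp only [Fin.cons_zero, Fin.cons_succ, smul_eq_mul, Algebra.smul_def] at *
    simpa using hc
  set M : Matrix (Fin (r+1)) (Fin r) K := fun p j => v j p with hM
  have hM0 : ∀ j, M 0 j = b j := by intro j; simp [hM, hv]
  have hMs : ∀ (i : Fin r) j, M i.succ j = a i j := by intro i j; simp [hM, hv]
  constructor
  · -- IsUnit g → LinearIndependent v
    intro hgu
    rw [Fintype.linearIndependent_iff]
    intro c hc
    have hc0 : ∑ j, b j * c j = 0 := by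
      have := congrFun hc 0
      simpa [hv, Finset.sum_apply, mul_comm] using this
    have hcs : ∀ i : Fin r, ∑ j, a i j * c j = 0 := by
      intro i
      have := congrFun hc i.succ
      simpa [hv, Finset.sum_apply, mul_comm] using this
    set y : Fin r → L := fun j => algebraMap K L (c j) with hy
    have hgy : g.mulVec y = 0 := by
      funext i
      have key : (g.mulVec y) i = algebraMap K L (∑ j, a i j * c j)
          + algebraMap K L (∑ j, b j * c j) * u i := by
        simp only [Matrix.mulVec, dotProduct, hg, hy, map_sum]
        rw [Finset.sum_congr rfl (fun j _ => show
          ((algebraMap K L) (a i j) + (algebraMap K L) (b j) * u i) * (algebraMap K L) (c j)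
            = algebraMap K L (a i j * c j) + algebraMap K L (b j * c j) * u i by
          rw [map_mul, map_mul]; ring), Finset.sum_add_distrib, ← Finset.sum_mul]
      rw [key, hc0, hcs i]
      simp
    have hy0 : y = 0 := by
      have hdet := (Matrix.isUnit_iff_isUnit_det g).mp hgu
      have := congrArg (fun w => g⁻¹.mulVec w) hgy
      simpa [Matrix.mulVec_mulVec, Matrix.nonsing_inv_mul g hdet] using this
    intro j
    exact hinj (by simpa [hy] using congrFun hy0 j)
  · -- LinearIndependent v → IsUnit g
    intro hLI
    -- left inverse N of M
    have hker : LinearMap.ker (Matrix.toLin' M) = ⊥ := by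
      rw [LinearMap.ker_eq_bot']
      intro x hx
      funext j
      refine Fintype.linearIndependent_iff.mp hLI x ?_ j
      funext p
      have := congrFun hx p
      rw [Matrix.toLin'_apply] at this
      simpa [Matrix.toLin'_apply, Matrix.mulVec, dotProduct, hM,
        Finset.sum_apply, mul_comm] using this
    obtain ⟨h, hh⟩ := (Matrix.toLin' M).exists_leftInverse_of_injective hker
    set N : Matrix (Fin r) (Fin (r+1)) K := LinearMap.toMatrix' h with hN
    have hNM : N * M = 1 := by
      have := congrArg LinearMap.toMatrix' hh
      rwa [LinearMap.toMatrix'_comp, LinearMap.toMatrix'_toLin', LinearMap.toMatrix'_id] at this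
    by_contra hgu
    -- get nonzero kernel vector of g
    have hdet : g.det = 0 := by
      by_contra hd
      exact hgu ((Matrix.isUnit_iff_isUnit_det g).mpr (isUnit_iff_ne_zero.mpr hd))
    obtain ⟨y, hy0, hgy⟩ := Matrix.exists_mulVec_eq_zero_iff.mpr hdet
    set Mi := M.map (algebraMap K L) with hMi
    set Ni := N.map (algebraMap K L) with hNi
    have hNMi : Ni * Mi = 1 := by
      rw [hMi, hNi, ← Matrix.map_mul, hNM]
      exact Matrix.map_one _ (map_zero _) (map_one _)
    have hrec : ∀ w : Fin r → L, Ni.mulVec (Mi.mulVec w) = w := by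
      intro w
      rw [Matrix.mulVec_mulVec, hNMi, Matrix.one_mulVec]
    set z : Fin (r+1) → L := Mi.mulVec y with hz
    have hzs : ∀ i : Fin r, z i.succ + u i * z 0 = 0 := by
      intro i
      have hgyi := congrFun hgy i
      have key : (g.mulVec y) i = z i.succ + u i * z 0 := by
        simp only [hz, Matrix.mulVec, dotProduct, hMi, Matrix.map_apply, hg, hM0, hMs,
          Finset.mul_sum]
        rw [← Finset.sum_add_distrib]
        exact Finset.sum_congr rfl (fun j _ => by ring)
      rw [key] at hgyi
      exact hgyi
    by_cases ht : z 0 = 0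
    · -- z = 0, so y = 0, contradiction
      have hzz : z = 0 := by
        funext p
        refine Fin.cases ?_ ?_ p
        · exact ht
        · intro i
          have h1 := hzs i
          rw [ht, mul_zero, add_zero] at h1
          exact h1
      exact hy0 (by rw [← hrec y, ← hz, hzz, Matrix.mulVec_zero])
    · -- z = z 0 • w with w = cons 1 (-u); derive M * N = 1, then trace contradiction
      set t := z 0 with htt
      set w : Fin (r+1) → L := Fin.cons 1 (fun i => -u i) with hw
      have hzw : z = t • w := by
        funext p
        refine Fin.cases ?_ ?_ p
        · simp [hw, htt]
        · intro i
          simp only [hw, Pi.smul_apply, Fin.cons_succ, smul_eq_mul]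
          have h1 : z i.succ = -(u i * t) := by linear_combination hzs i
          rw [h1]; ring
      have hwMN : ((M * N).map (algebraMap K L)).mulVec w = w := by
        have h1 : Mi.mulVec (t⁻¹ • y) = w := by
          rw [Matrix.mulVec_smul, ← hz, hzw, smul_smul, inv_mul_cancel₀ ht, one_smul]
        have h2 : Ni.mulVec w = t⁻¹ • y := by rw [← h1, hrec]
        rw [Matrix.map_mul, ← Matrix.mulVec_mulVec, ← hMi, ← hNi, h2, h1]
      -- the difference matrix kills w
      set d : Matrix (Fin (r+1)) (Fin (r+1)) K := M * N - 1 with hd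
      have hdw : (d.map (algebraMap K L)).mulVec w = 0 := by
        have hmap : d.map (algebraMap K L) = Mi * Ni - 1 := by
          ext p q
          simp only [hd, Matrix.map_apply, Matrix.sub_apply, map_sub]
          congr 1
          · rw [hMi, hNi, ← Matrix.map_mul]; rfl
          · simp only [Matrix.one_apply]
            split <;> simp
        rw [hmap, Matrix.sub_mulVec, Matrix.one_mulVec, hMi, hNi, ← Matrix.map_mul, hwMN,
          sub_self]
      have hd0 : ∀ p q, d p q = 0 := by
        intro p
        have hp := congrFun hdw p
        simp only [Pi.zero_apply] at hp
        have hexp : algebraMap K L (d p 0) + ∑ i, algebraMap K L (-(d p i.succ)) * u i = 0 := by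
          have : (d.map (algebraMap K L)).mulVec w p
              = algebraMap K L (d p 0) * 1 + ∑ i : Fin r, algebraMap K L (d p i.succ) * w i.succ := by
            simp only [Matrix.mulVec, dotProduct, Matrix.map_apply]
            rw [Fin.sum_univ_succ]
            simp [hw]
          rw [this] at hp
          rw [← hp]
          simp only [hw, Fin.cons_succ, map_neg, mul_one]
          congr 1
          exact Finset.sum_congr rfl (fun i _ => by ring)
        have hall := hcoef (Fin.cons (d p 0) (fun i => -(d p i.succ))) (by simpa using hexp)
        intro q
        refine Fin.cases ?_ ?_ q
        · simpa using hall 0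
        · intro i
          have := hall i.succ
          simp only [Fin.cons_succ, neg_eq_zero] at this
          exact this
      have hMN1 : M * N = 1 := by
        have : d = 0 := by ext p q; exact hd0 p q
        rw [hd] at this
        exact sub_eq_zero.mp this
      -- trace contradiction
      have h1 : Matrix.trace (M * N) = ((r : K) + 1) := by
        rw [hMN1, Matrix.trace_one]
        simp
      have h2 : Matrix.trace (N * M) = (r : K) := by
        rw [hNM, Matrix.trace_one]; simp
      rw [Matrix.trace_mul_comm, h2] at h1
      exact one_ne_zero (by linear_combination -h1)
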